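/- Let k be a field and equip k^{2n} with the hyperbolic quadratic form. For any three maximal isotropic subspaces Z_1, Z_2, Z_3 of k^{2n}, one has dim(Z_1 ∩ Z_2) + dim(Z_2 ∩ Z_3) + dim(Z_3 ∩ Z_1) ≡ n (mod 2). -/

import Mathlib

/-- The hyperbolic quadratic form `Q(x,y) = Σ xᵢ yᵢ` on `k^n × k^n ≅ k^{2n}`. -/
def hypQ {k : Type*} [CommRing k] {n : ℕ} (v : (Fin n → k) × (Fin n → k)) : k :=
  ∑ i, v.1 i * v.2 i

open LinearMap Module Submodule

section Aux


universe u v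

lemma alt_parity {k : Type u} [Field k] :
    ∀ (m : ℕ) (V : Type v) [AddCommGroup V] [Module k V] [FiniteDimensional k V],
    Module.finrank k V = m → ∀ B : LinearMap.BilinForm k V, B.IsAlt →
    Module.finrank k ↥(LinearMap.ker B) ≡ m [MOD 2] := by
  intro m
  induction m using Nat.strong_induction_on with
  | _ m ih =>
    intro V _ _ _ hV B hB
    by_cases h0 : B = 0
    · subst h0
      have : Module.finrank k ↥(LinearMap.ker (0 : LinearMap.BilinForm k V)) = m := by
        rw [LinearMap.ker_zero, finrank_top, hV]
      rw [this]
    · have : ∃ u v : V, B u v ≠ 0 := by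
        by_contra hc
        push_neg at hc
        exact h0 (by ext u v; simp [hc])
      obtain ⟨u, v, huv⟩ := this
      have hvu : B v u ≠ 0 := fun h => huv (by rw [← LinearMap.IsAlt.neg hB v u, h, neg_zero])
      set W : Submodule k V := Submodule.span k {u, v} with hW
      have hu : u ∈ W := Submodule.subset_span (by simp)
      have hv : v ∈ W := Submodule.subset_span (by simp)
      have hrefl : B.IsRefl := hB.isRefl
      have hnd : (B.restrict W).Nondegenerate := by
        refine (LinearMap.IsRefl.nondegenerate_iff_separatingLeft (B := B.restrict W)
          (fun x y h => hrefl x y h)).2 ?_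
        rintro ⟨w, hw⟩ h
        have h1 : B w u = 0 := h ⟨u, hu⟩
        have h2 : B w v = 0 := h ⟨v, hv⟩
        have hmem : w ∈ Submodule.span k {u, v} := hw
        rw [Submodule.mem_span_pair] at hmem
        obtain ⟨a, b, rfl⟩ := hmem
        have e1 : b * B v u = 0 := by simpa [mul_comm, hB.self_eq_zero] using h1
        have e2 : a * B u v = 0 := by simpa [mul_comm, hB.self_eq_zero] using h2
        have hb : b = 0 := by rcases mul_eq_zero.1 e1 with h' | h'; exact h'; exact absurd h' hvu
        have ha : a = 0 := by rcases mul_eq_zero.1 e2 with h' | h'; exact h'; exact absurd h' huv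
        ext; simp [ha, hb]
      have hcompl : IsCompl W (B.orthogonal W) :=
        LinearMap.BilinForm.isCompl_orthogonal_of_restrict_nondegenerate hrefl hnd
      have hdimW : Module.finrank k ↥W = 2 := by
        have hind : LinearIndependent k ![u, v] := by
          rw [LinearIndependent.pair_iff]
          intro a b hab
          have h1 : B (a • u + b • v) v = 0 := by rw [hab]; simp
          have h2 : B (a • u + b • v) u = 0 := by rw [hab]; simp
          have e2 : a * B u v = 0 := by simpa [hB.self_eq_zero, mul_comm] using h1
          have e1 : b * B v u = 0 := by simpa [hB.self_eq_zero, mul_comm] using h2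
          constructor
          · rcases mul_eq_zero.1 e2 with h' | h'; exact h'; exact absurd h' huv
          · rcases mul_eq_zero.1 e1 with h' | h'; exact h'; exact absurd h' hvu
        have hr : W = Submodule.span k (Set.range ![u, v]) := by
          rw [hW]; congr 1
          ext x
          simp only [Matrix.range_cons, Matrix.range_empty, Set.union_empty]
          constructor <;> (intro h; tauto)
        rw [hr, finrank_span_eq_card hind]
        simp
      -- the orthogonal complement
      set W' := B.orthogonal W with hW'
      have hsum : Module.finrank k ↥W + Module.finrank k ↥W' = m := by
        rw [← hV]
        exact Submodule.finrank_add_eq_of_isCompl hcompl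
      -- ker B = map of ker of restriction
      have hker : Submodule.map W'.subtype (LinearMap.ker (B.restrict W')) = LinearMap.ker B := by
        ext x
        simp only [Submodule.mem_map, LinearMap.mem_ker]
        constructor
        · rintro ⟨⟨y, hy⟩, hy0, rfl⟩
          -- B y = 0 : it kills W' and kills W
          ext z
          have hz : z ∈ (⊤ : Submodule k V) := trivial
          rw [← hcompl.sup_eq_top] at hz
          rcases Submodule.mem_sup.1 hz with ⟨w, hw, w', hw', rfl⟩
          have k1 : B y w = 0 := hrefl w y (hy w hw)
          have k2 : B y w' = 0 := by
            have h' : ((B.restrict W') ⟨y, hy⟩) ⟨w', hw'⟩ = 0 := by rw [hy0]; rfl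
            simpa using h'
          simp [map_add, k1, k2]
        · intro hx
          have hxW' : x ∈ W' := by
            intro w hw
            exact hrefl x w (by rw [hx]; rfl)
          refine ⟨⟨x, hxW'⟩, ?_, rfl⟩
          ext z
          have : B x z = 0 := by rw [hx]; rfl
          simpa [LinearMap.BilinForm.restrict_apply] using this
      have hrank : Module.finrank k ↥(LinearMap.ker (B.restrict W')) =
          Module.finrank k ↥(LinearMap.ker B) := by
        rw [← hker, Submodule.finrank_map_subtype_eq]
      -- apply IH
      have hlt : Module.finrank k ↥W' < m := by omega
      have halt : (B.restrict W').IsAlt := fun x => hB x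
      have := ih (Module.finrank k ↥W') hlt ↥W' rfl (B.restrict W') halt
      rw [hrank] at this
      have h2 : Module.finrank k ↥W' % 2 = m % 2 := by omega
      unfold Nat.ModEq at this ⊢
      omega


variable {k : Type*} [Field k] {n : ℕ}




/-- The polar bilinear form of `hypQ`. -/
def hypB (k : Type*) [Field k] (n : ℕ) :
    LinearMap.BilinForm k ((Fin n → k) × (Fin n → k)) :=
  LinearMap.mk₂ k (fun v w => ∑ i, v.1 i * w.2 i + ∑ i, w.1 i * v.2 i)
    (by intros; simp [add_mul, mul_add, Finset.sum_add_distrib]; ring)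
    (by intros; simp only [Prod.smul_fst, Prod.smul_snd, Pi.smul_apply, smul_eq_mul,
      mul_add, Finset.mul_sum, mul_assoc, mul_left_comm])
    (by intros; simp [add_mul, mul_add, Finset.sum_add_distrib]; ring)
    (by intros; simp only [Prod.smul_fst, Prod.smul_snd, Pi.smul_apply, smul_eq_mul,
      mul_add, Finset.mul_sum, mul_assoc, mul_left_comm])

lemma hypB_apply (v w : (Fin n → k) × (Fin n → k)) :
    hypB k n v w = ∑ i, v.1 i * w.2 i + ∑ i, w.1 i * v.2 i := rfl

lemma hypB_polar (v w : (Fin n → k) × (Fin n → k)) :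
    hypB k n v w = hypQ (v + w) - hypQ v - hypQ w := by
  simp [hypB_apply, hypQ, add_mul, mul_add, Finset.sum_add_distrib]
  ring

lemma hypB_symm (v w : (Fin n → k) × (Fin n → k)) : hypB k n v w = hypB k n w v := by
  simp [hypB_apply]; ring

lemma hypB_refl : (hypB k n).IsRefl := fun v w h => by rw [hypB_symm]; exact h

lemma hypB_nondeg : (hypB k n).Nondegenerate := by
  refine (LinearMap.IsRefl.nondegenerate_iff_separatingLeft (B := hypB k n)
    (fun x y h => hypB_refl x y h)).2 ?_
  intro v h
  have h1 : ∀ i, v.1 i = 0 := fun i => by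
    simpa [hypB_apply, Pi.single_apply, mul_comm] using h (0, Pi.single i 1)
  have h2 : ∀ i, v.2 i = 0 := fun i => by
    simpa [hypB_apply, Pi.single_apply, mul_comm] using h (Pi.single i 1, 0)
  ext i
  exacts [h1 i, h2 i]

/-- on an isotropic subspace the polar form vanishes -/
lemma hypB_eq_zero {Z : Submodule k ((Fin n → k) × (Fin n → k))}
    (hZ : ∀ v ∈ Z, hypQ v = 0) {z w : (Fin n → k) × (Fin n → k)}
    (hz : z ∈ Z) (hw : w ∈ Z) : hypB k n z w = 0 := by
  rw [hypB_polar, hZ _ (Z.add_mem hz hw), hZ _ hz, hZ _ hw]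
  ring

/-- rank--nullity for the image of a submodule -/
lemma finrank_map_add_inf_ker {V W : Type*} [AddCommGroup V] [Module k V]
    [AddCommGroup W] [Module k W] [FiniteDimensional k V]
    (f : V →ₗ[k] W) (Z : Submodule k V) :
    Module.finrank k ↥(Z.map f) + Module.finrank k ↥(Z ⊓ LinearMap.ker f) =
      Module.finrank k ↥Z := by
  have h1 := LinearMap.finrank_range_add_finrank_ker (f.domRestrict Z)
  have h2 : LinearMap.range (f.domRestrict Z) = Z.map f := by
    ext x; simp [LinearMap.mem_range, Submodule.mem_map]
  have h3 : LinearMap.ker (f.domRestrict Z) = Submodule.comap Z.subtype (LinearMap.ker f) := by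
    ext x; simp
  have h4 : Module.finrank k ↥(Submodule.comap Z.subtype (LinearMap.ker f)) =
      Module.finrank k ↥(Z ⊓ LinearMap.ker f) := by
    rw [← Submodule.map_comap_subtype, Submodule.finrank_map_subtype_eq]
  rw [h2, h3, h4] at h1
  exact h1

/-- existence of a linear section of the projection of a submodule -/
lemma exists_section {V W : Type*} [AddCommGroup V] [Module k V]
    [AddCommGroup W] [Module k W] (f : V →ₗ[k] W) (Z : Submodule k V) :
    ∃ s : ↥(Z.map f) →ₗ[k] V, (∀ u, s u ∈ Z) ∧ ∀ u, f (s u) = ↑u := by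
  have hsurj : ∀ u : ↥(Z.map f), ∃ z : ↥Z, f z = (u : W) := by
    rintro ⟨u, hu⟩
    rcases Submodule.mem_map.1 hu with ⟨z, hz, rfl⟩
    exact ⟨⟨z, hz⟩, rfl⟩
  let g : ↥Z →ₗ[k] ↥(Z.map f) :=
    (f.comp Z.subtype).codRestrict (Z.map f) (fun z => Submodule.mem_map_of_mem z.2)
  have hg : LinearMap.range g = ⊤ := by
    rw [LinearMap.range_eq_top]
    rintro u
    obtain ⟨z, hz⟩ := hsurj u
    exact ⟨z, Subtype.ext hz⟩
  obtain ⟨σ, hσ⟩ := g.exists_rightInverse_of_surjective hg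
  refine ⟨Z.subtype.comp σ, fun u => (σ u).2, fun u => ?_⟩
  have := congrArg Subtype.val (congrFun (congrArg DFunLike.coe hσ) u)
  simpa [g] using this



variable {k : Type*} [Field k] {n : ℕ}

-- orthogonal of sup
lemma orth_sup (B : LinearMap.BilinForm k ((Fin n → k) × (Fin n → k)))
    (A C : Submodule k ((Fin n → k) × (Fin n → k))) :
    B.orthogonal (A ⊔ C) = B.orthogonal A ⊓ B.orthogonal C := by
  ext x
  simp only [LinearMap.BilinForm.mem_orthogonal_iff, Submodule.mem_inf]
  constructor
  · intro h
    exact ⟨fun a ha => h a (Submodule.mem_sup_left ha),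
           fun c hc => h c (Submodule.mem_sup_right hc)⟩
  · rintro ⟨h1, h2⟩ v hv
    rcases Submodule.mem_sup.1 hv with ⟨a, ha, c, hc, rfl⟩
    have := h1 a ha
    have := h2 c hc
    simp [map_add, *]


-- pair lemma
set_option maxHeartbeats 2000000 in
lemma pair_lemma (Z Z' : Submodule k ((Fin n → k) × (Fin n → k)))
    (hd : Module.finrank k Z = n) (hi : ∀ v ∈ Z, hypQ v = 0)
    (hd' : Module.finrank k Z' = n) (hi' : ∀ v ∈ Z', hypQ v = 0) :
    (Module.finrank k ↥(Z ⊓ Z')) % 2 =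
      (n + Module.finrank k ↥(Z ⊓ LinearMap.ker (LinearMap.snd k (Fin n → k) (Fin n → k)))
         + Module.finrank k ↥(Z' ⊓ LinearMap.ker (LinearMap.snd k (Fin n → k) (Fin n → k)))) % 2 := by
  set π : ((Fin n → k) × (Fin n → k)) →ₗ[k] (Fin n → k) := LinearMap.snd k _ _ with hπ
  set X : Submodule k ((Fin n → k) × (Fin n → k)) := LinearMap.ker π with hX
  have memX : ∀ v : (Fin n → k) × (Fin n → k), v ∈ X ↔ v.2 = 0 := by
    intro v; simp [hX, hπ, LinearMap.mem_ker]
  have hXiso : ∀ v ∈ X, hypQ v = 0 := by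
    intro v hv
    rw [memX] at hv
    simp [hypQ, hv]
  have hVrank : Module.finrank k ((Fin n → k) × (Fin n → k)) = n + n := by simp
  have hXrank : Module.finrank k ↥X = n := by
    have h1 := LinearMap.finrank_range_add_finrank_ker π
    have h2 : LinearMap.range π = ⊤ := LinearMap.range_eq_top.2 (fun y => ⟨(0, y), rfl⟩)
    rw [h2, finrank_top, hVrank] at h1
    have hfin : Module.finrank k (Fin n → k) = n := by simp
    rw [hfin] at h1
    rw [hX]
    omega
  -- orthogonal identities
  have horth : ∀ (W : Submodule k ((Fin n → k) × (Fin n → k))),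
      Module.finrank k W = n → (∀ v ∈ W, hypQ v = 0) →
      (hypB k n).orthogonal (W ⊓ X) = W ⊔ X := by
    intro W hWd hWi
    have hle : W ⊔ X ≤ (hypB k n).orthogonal (W ⊓ X) := by
      apply sup_le
      · intro z hz
        rw [LinearMap.BilinForm.mem_orthogonal_iff]
        intro w hw
        exact hypB_eq_zero hWi hw.1 hz
      · intro x hx
        rw [LinearMap.BilinForm.mem_orthogonal_iff]
        intro w hw
        exact hypB_eq_zero hXiso hw.2 hx
    have hr1 : Module.finrank k ↥((hypB k n).orthogonal (W ⊓ X)) =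
        (n + n) - Module.finrank k ↥(W ⊓ X) := by
      rw [LinearMap.BilinForm.finrank_orthogonal hypB_nondeg, hVrank]
    have hr2 : Module.finrank k ↥(W ⊔ X) + Module.finrank k ↥(W ⊓ X) = n + n := by
      rw [Submodule.finrank_sup_add_finrank_inf_eq, hWd, hXrank]
    have hr3 : Module.finrank k ↥(W ⊓ X) ≤ n := by
      have := Submodule.finrank_mono (inf_le_right : W ⊓ X ≤ X)
      omega
    exact (Submodule.eq_of_le_of_finrank_le hle (by omega)).symm
  have horthZ := horth Z hd hi
  have horthZ' := horth Z' hd' hi'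
  -- U and sections
  set U : Submodule k (Fin n → k) := (Z.map π) ⊓ (Z'.map π) with hU
  obtain ⟨s, hsZ, hs2⟩ := exists_section π Z
  obtain ⟨s', hs'Z, hs'2⟩ := exists_section π Z'
  set f : ↥U →ₗ[k] ((Fin n → k) × (Fin n → k)) := s.comp (Submodule.inclusion inf_le_left) with hf
  set g : ↥U →ₗ[k] ((Fin n → k) × (Fin n → k)) := s'.comp (Submodule.inclusion inf_le_right) with hg
  have hfZ : ∀ u, f u ∈ Z := fun u => hsZ _
  have hgZ' : ∀ u, g u ∈ Z' := fun u => hs'Z _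
  have hf2 : ∀ u : ↥U, (f u).2 = ↑u := fun u => hs2 _
  have hg2 : ∀ u : ↥U, (g u).2 = ↑u := fun u => hs'2 _
  set β : LinearMap.BilinForm k ↥U := (hypB k n).compl₁₂ f g with hβ
  have hβapp : ∀ u w : ↥U, β u w = hypB k n (f u) (g w) := fun u w => rfl
  have halt : β.IsAlt := by
    intro u
    rw [hβapp, hypB_apply]
    have e1 : hypQ (f u) = ∑ i, (f u).1 i * (↑u : Fin n → k) i := by
      rw [hypQ, hf2]
    have e2 : hypQ (g u) = ∑ i, (g u).1 i * (↑u : Fin n → k) i := by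
      rw [hypQ, hg2]
    rw [hf2, hg2, ← e1, ← e2, hi _ (hfZ u), hi' _ (hgZ' u), add_zero]
  -- kernel identity
  have hkerβ : Submodule.map U.subtype (LinearMap.ker β) = (Z ⊓ Z').map π := by
    apply le_antisymm
    · rintro x ⟨u, hu, rfl⟩
      have hu0 : β u = 0 := hu
      set z := f u with hz
      set z' := g u with hz'
      have hBk : ∀ u₂ : ↥U, hypB k n (z - z') (g u₂) = 0 := by
        intro u₂
        have h1 : hypB k n z (g u₂) = 0 := by
          have := congrFun (congrArg DFunLike.coe hu0) u₂
          simpa [hβapp] using this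
        have h2 : hypB k n z' (g u₂) = 0 := hypB_eq_zero hi' (hgZ' u) (hgZ' u₂)
        simp [map_sub, LinearMap.sub_apply, h1, h2]
      -- z - z' is orthogonal to (Z ⊔ X) ⊓ (Z' ⊔ X)
      have hdiff2 : (z - z').2 = 0 := by
        simp [hz, hz', hf2 u, hg2 u]
      have hmemU : ∀ v ∈ (Z ⊔ X) ⊓ (Z' ⊔ X), v.2 ∈ U := by
        rintro v ⟨hv1, hv2⟩
        constructor
        · rcases Submodule.mem_sup.1 hv1 with ⟨ζ, hζ, x, hx, rfl⟩
          exact ⟨ζ, hζ, by simp [hπ, (memX x).1 hx]⟩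
        · rcases Submodule.mem_sup.1 hv2 with ⟨ζ, hζ, x, hx, rfl⟩
          exact ⟨ζ, hζ, by simp [hπ, (memX x).1 hx]⟩
      have horthmem : z - z' ∈ (hypB k n).orthogonal ((Z ⊔ X) ⊓ (Z' ⊔ X)) := by
        rw [LinearMap.BilinForm.mem_orthogonal_iff]
        intro v hv
        rw [hypB_symm]
        set u₂ : ↥U := ⟨v.2, hmemU v hv⟩ with hu₂
        have key := hBk u₂
        rw [hypB_apply] at key ⊢
        rw [hdiff2] at key ⊢
        simp only [Pi.zero_apply, mul_zero, Finset.sum_const_zero, add_zero] at key ⊢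
        rw [hg2 u₂] at key
        exact key
      have horthval : (hypB k n).orthogonal ((Z ⊔ X) ⊓ (Z' ⊔ X)) = (Z ⊓ X) ⊔ (Z' ⊓ X) := by
        rw [← horthZ, ← horthZ', ← orth_sup]
        exact LinearMap.BilinForm.orthogonal_orthogonal hypB_nondeg hypB_refl _
      rw [horthval] at horthmem
      rcases Submodule.mem_sup.1 horthmem with ⟨w, hw, w', hw', hww'⟩
      refine ⟨z - w, ⟨Z.sub_mem (hfZ u) hw.1, ?_⟩, ?_⟩
      · have : z - w = z' + w' := by
          have : z - z' = w + w' := hww'.symm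
          linear_combination (norm := module) this
        rw [this]
        exact Z'.add_mem (hgZ' u) hw'.1
      · show π (z - w) = ↑u
        have : (z - w).2 = ↑u := by
          have hw2 : w.2 = 0 := (memX w).1 hw.2
          simp [hz, hf2 u, hw2]
        exact this
    · rintro x ⟨z, hz, rfl⟩
      have hzU : π z ∈ U := ⟨⟨z, hz.1, rfl⟩, ⟨z, hz.2, rfl⟩⟩
      refine ⟨⟨π z, hzU⟩, ?_, rfl⟩
      show β ⟨π z, hzU⟩ = 0
      ext u₂
      rw [hβapp]
      set u₀ : ↥U := ⟨π z, hzU⟩ with hu₀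
      set d := f u₀ - z with hd
      have hdZ : d ∈ Z := Z.sub_mem (hfZ u₀) hz.1
      have hd2 : d.2 = 0 := by
        have hf2' := hf2 u₀
        rw [hd]
        show (f u₀).2 - z.2 = 0
        rw [hf2']
        exact sub_self _
      have h1 : hypB k n z (g u₂) = 0 := hypB_eq_zero hi' hz.2 (hgZ' u₂)
      have h2 : hypB k n d (g u₂) = 0 := by
        obtain ⟨⟨ζ, hζ, hζ2⟩, -⟩ := u₂.2
        have hBdζ : hypB k n d ζ = 0 := hypB_eq_zero hi hdZ hζ
        rw [hypB_apply] at hBdζ ⊢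
        rw [hd2] at hBdζ ⊢
        simp only [Pi.zero_apply, mul_zero, Finset.sum_const_zero, add_zero] at hBdζ ⊢
        rw [hg2 u₂, ← hζ2]
        exact hBdζ
      have : f u₀ = z + d := by simp [hd]
      rw [this, map_add, LinearMap.add_apply, h1, h2, add_zero]
      rfl
  -- dimension bookkeeping
  have e1 := finrank_map_add_inf_ker π (Z ⊓ Z')
  rw [show LinearMap.ker π = X from rfl] at e1
  have e2 : Module.finrank k ↥((Z ⊓ Z').map π) = Module.finrank k ↥(LinearMap.ker β) := by
    rw [← hkerβ, Submodule.finrank_map_subtype_eq]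
  have e3 : Module.finrank k ↥(LinearMap.ker β) % 2 = Module.finrank k ↥U % 2 :=
    alt_parity (Module.finrank k ↥U) ↥U rfl β halt
  -- finrank U
  have hUA : ((Z ⊔ X) ⊓ (Z' ⊔ X)).map π = U := by
    apply le_antisymm
    · rintro y ⟨v, ⟨hv1, hv2⟩, rfl⟩
      constructor
      · rcases Submodule.mem_sup.1 hv1 with ⟨ζ, hζ, x, hx, rfl⟩
        exact ⟨ζ, hζ, by simp [hπ, (memX x).1 hx]⟩
      · rcases Submodule.mem_sup.1 hv2 with ⟨ζ, hζ, x, hx, rfl⟩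
        exact ⟨ζ, hζ, by simp [hπ, (memX x).1 hx]⟩
    · rintro y ⟨⟨z, hz, rfl⟩, ⟨z', hz', h2⟩⟩
      refine ⟨z, ⟨Submodule.mem_sup_left hz, ?_⟩, rfl⟩
      have : z = z' + (z - z') := by ring_nf
      rw [this]
      exact Submodule.add_mem _ (Submodule.mem_sup_left hz')
        (Submodule.mem_sup_right ((memX _).2 (by simp [hπ] at h2 ⊢; rw [h2]; exact sub_self _)))
  have e4 := finrank_map_add_inf_ker π ((Z ⊔ X) ⊓ (Z' ⊔ X))
  rw [show LinearMap.ker π = X from rfl] at e4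
  have hXle : ((Z ⊔ X) ⊓ (Z' ⊔ X)) ⊓ X = X := by
    rw [inf_eq_right.2]
    exact le_inf le_sup_right le_sup_right
  rw [hUA, hXle, hXrank] at e4
  have e5 : Module.finrank k ↥((Z ⊔ X) ⊓ (Z' ⊔ X)) =
      (n + n) - Module.finrank k ↥((Z ⊓ X) ⊔ (Z' ⊓ X)) := by
    have horthval : (Z ⊔ X) ⊓ (Z' ⊔ X) = (hypB k n).orthogonal ((Z ⊓ X) ⊔ (Z' ⊓ X)) := by
      rw [orth_sup, horthZ, horthZ']
    rw [horthval, LinearMap.BilinForm.finrank_orthogonal hypB_nondeg, hVrank]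
  have e6 : Module.finrank k ↥((Z ⊓ X) ⊔ (Z' ⊓ X)) + Module.finrank k ↥((Z ⊓ X) ⊓ (Z' ⊓ X)) =
      Module.finrank k ↥(Z ⊓ X) + Module.finrank k ↥(Z' ⊓ X) :=
    Submodule.finrank_sup_add_finrank_inf_eq _ _
  have e7 : (Z ⊓ X) ⊓ (Z' ⊓ X) = Z ⊓ Z' ⊓ X := by
    ext v; simp only [Submodule.mem_inf]; tauto
  have e8 : Module.finrank k ↥((Z ⊓ X) ⊔ (Z' ⊓ X)) ≤ n + n := by
    rw [← hVrank]; exact Submodule.finrank_le _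
  rw [e7] at e6
  rw [e2] at e1
  omega


end Aux

/-- For any three maximal isotropic subspaces `Z₁, Z₂, Z₃` of `k^{2n}` with its hyperbolic
quadratic form, `dim(Z₁ ∩ Z₂) + dim(Z₂ ∩ Z₃) + dim(Z₃ ∩ Z₁) ≡ n (mod 2)`. -/
theorem stmt17 (k : Type*) [Field k] (n : ℕ)
    (Z₁ Z₂ Z₃ : Submodule k ((Fin n → k) × (Fin n → k)))
    (h₁ : Module.finrank k Z₁ = n ∧ ∀ v ∈ Z₁, hypQ v = 0)
    (h₂ : Module.finrank k Z₂ = n ∧ ∀ v ∈ Z₂, hypQ v = 0)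
    (h₃ : Module.finrank k Z₃ = n ∧ ∀ v ∈ Z₃, hypQ v = 0) :
    (Module.finrank k ↥(Z₁ ⊓ Z₂) + Module.finrank k ↥(Z₂ ⊓ Z₃) +
        Module.finrank k ↥(Z₃ ⊓ Z₁)) ≡ n [MOD 2] := by
  obtain ⟨hd1, hi1⟩ := h₁
  obtain ⟨hd2, hi2⟩ := h₂
  obtain ⟨hd3, hi3⟩ := h₃
  have p12 := pair_lemma Z₁ Z₂ hd1 hi1 hd2 hi2
  have p23 := pair_lemma Z₂ Z₃ hd2 hi2 hd3 hi3
  have p31 := pair_lemma Z₃ Z₁ hd3 hi3 hd1 hi1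
  unfold Nat.ModEq
  omega
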